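/- (Inner products of box splines, Dahmen–Micchelli.) Let E = (v₁, …, vₙ) and F = (w₁, …, w_m) be two lists of vectors in ℝ^d with n ≥ d, m ≥ d, such that v₁, …, v_d are linearly independent and w₁, …, w_d are linearly independent, and let m_E = (v₁ + ⋯ + vₙ)/2. Then for Lebesgue-almost every y ∈ ℝ^d, ∫_{ℝ^d} M_E(x) · M_F(x + y) dx = M_{E++F}(2 m_E + y), where E ++ F denotes the concatenated list (v₁, …, vₙ, w₁, …, w_m). -/

import Mathlib

open MeasureTheory

open scoped Classical in
/-- The box spline `M_{v₁,…,vₙ}` with direction vectors given by the list `v` in `ℝ^d`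
(represented as `Fin d → ℝ`), defined recursively: when the list has length `≤ d`
(base case, length `= d` in intended use) it is the normalized indicator of the
parallelepiped spanned by the first `d` vectors, scaled by `1/|det[v₁ ⋯ v_d]|`;
otherwise one integrates out the last direction vector over `[0,1]`. -/
noncomputable def boxSpline (d : ℕ) (v : List (Fin d → ℝ)) : (Fin d → ℝ) → ℝ :=
  if _h : v.length ≤ d then
    fun x =>
      if ∃ t : Fin d → ℝ, (∀ k, t k ∈ Set.Icc (0 : ℝ) 1) ∧ x = ∑ k, t k • v.getD k.val 0 then
        |Matrix.det (Matrix.of fun i j : Fin d => v.getD j.val 0 i)|⁻¹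
      else 0
  else
    fun x => ∫ t in (0 : ℝ)..1, boxSpline d v.dropLast (x - t • v.getLastD 0)
termination_by v.length
decreasing_by
  simp only [List.length_dropLast]
  omega


private lemma getD_dropLast' {α : Type*} (l : List α) (a : α) (i : ℕ) (h : i < l.length - 1) :
    l.dropLast.getD i a = l.getD i a := by
  rw [List.getD_eq_getElem _ _ (by simpa using h), List.getD_eq_getElem _ _ (by omega),
    List.getElem_dropLast]

private lemma getLastD_eq_getD {α : Type*} (l : List α) (a : α) (h : l ≠ []) :
    l.getLastD a = l.getD (l.length - 1) a := by
  rw [List.getLastD_eq_getLast?, List.getLast?_eq_getElem?, List.getD_eq_getElem?_getD]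

theorem boxSpline_nonneg (d : ℕ) (v : List (Fin d → ℝ)) (x : Fin d → ℝ) :
    0 ≤ boxSpline d v x := by
  rw [boxSpline]
  split
  · dsimp only
    split
    · positivity
    · exact le_refl 0
  · exact intervalIntegral.integral_nonneg zero_le_one fun t _ => boxSpline_nonneg d _ _
termination_by v.length
decreasing_by simp only [List.length_dropLast]; omega

theorem boxSpline_measurable (d : ℕ) (v : List (Fin d → ℝ)) :
    Measurable (boxSpline d v) := by
  rw [boxSpline]
  split
  · refine Measurable.ite ?_ measurable_const measurable_const
    have : {x : Fin d → ℝ | ∃ t : Fin d → ℝ, (∀ k, t k ∈ Set.Icc (0:ℝ) 1) ∧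
        x = ∑ k, t k • v.getD k.val 0}
        = (fun t : Fin d → ℝ => ∑ k, t k • v.getD k.val 0) ''
            (Set.univ.pi fun _ => Set.Icc 0 1) := by
      ext x
      constructor
      · rintro ⟨t, ht, rfl⟩
        exact ⟨t, fun k _ => ht k, rfl⟩
      · rintro ⟨t, ht, rfl⟩
        exact ⟨t, fun k => ht k trivial, rfl⟩
    rw [this]
    have hcont : Continuous (fun t : Fin d → ℝ => ∑ k, t k • v.getD k.val 0) :=
      continuous_finset_sum _ fun k _ => (continuous_apply k).smul continuous_const
    exact (((isCompact_univ_pi fun _ => isCompact_Icc).image hcont)).measurableSet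
  · simp only [intervalIntegral.integral_of_le zero_le_one]
    have hF : StronglyMeasurable fun p : (Fin d → ℝ) × ℝ =>
        boxSpline d v.dropLast (p.1 - p.2 • v.getLastD 0) :=
      ((boxSpline_measurable d v.dropLast).comp
        (measurable_fst.sub (measurable_snd.smul_const _))).stronglyMeasurable
    exact hF.integral_prod_right'.measurable
termination_by v.length
decreasing_by all_goals simp only [List.length_dropLast]; omega

theorem boxSpline_le (d : ℕ) (v : List (Fin d → ℝ)) (hv : d ≤ v.length) (x : Fin d → ℝ) :
    boxSpline d v x ≤ |Matrix.det (Matrix.of fun i j : Fin d => v.getD j.val 0 i)|⁻¹ := by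
  rw [boxSpline]
  split
  · dsimp only
    split
    · exact le_refl _
    · positivity
  · rename_i h
    have hlen : d < v.length := by omega
    have hdet : (Matrix.of fun i j : Fin d => v.dropLast.getD j.val 0 i)
        = (Matrix.of fun i j : Fin d => v.getD j.val 0 i) := by
      ext i j
      simp only [Matrix.of_apply]
      rw [getD_dropLast' _ _ _ (by omega)]
    have hv' : d ≤ v.dropLast.length := by simp only [List.length_dropLast]; omega
    have hle : ∀ t : ℝ, boxSpline d v.dropLast (x - t • v.getLastD 0) ≤
        |Matrix.det (Matrix.of fun i j : Fin d => v.getD j.val 0 i)|⁻¹ := fun t => by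
      rw [← hdet]; exact boxSpline_le d v.dropLast hv' _
    have hint : IntervalIntegrable
        (fun t : ℝ => boxSpline d v.dropLast (x - t • v.getLastD 0)) volume 0 1 := by
      rw [intervalIntegrable_iff]
      refine Measure.integrableOn_of_bounded
        (M := |Matrix.det (Matrix.of fun i j : Fin d => v.getD j.val 0 i)|⁻¹)
        (by rw [Set.uIoc_of_le zero_le_one]; simp) ?_ (ae_of_all _ fun t => ?_)
      · exact ((boxSpline_measurable d v.dropLast).comp
          ((measurable_const.sub (measurable_id.smul_const _)))).aestronglyMeasurable
      · rw [Real.norm_eq_abs, abs_of_nonneg (boxSpline_nonneg _ _ _)]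
        exact hle t
    calc ∫ t in (0:ℝ)..1, boxSpline d v.dropLast (x - t • v.getLastD 0)
        ≤ ∫ _t in (0:ℝ)..1, |Matrix.det (Matrix.of fun i j : Fin d => v.getD j.val 0 i)|⁻¹ :=
          intervalIntegral.integral_mono_on zero_le_one hint intervalIntegrable_const
            fun t _ => hle t
      _ = |Matrix.det (Matrix.of fun i j : Fin d => v.getD j.val 0 i)|⁻¹ := by simp
termination_by v.length
decreasing_by simp only [List.length_dropLast]; omega

theorem boxSpline_integrableOn_Ioc (d : ℕ) (v : List (Fin d → ℝ)) (hv : d ≤ v.length)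
    (x : Fin d → ℝ) (c : Fin d → ℝ) :
    IntegrableOn (fun t : ℝ => boxSpline d v (x - t • c)) (Set.Ioc 0 1) volume := by
  refine Measure.integrableOn_of_bounded (M := |Matrix.det (Matrix.of fun i j : Fin d => v.getD j.val 0 i)|⁻¹) (by simp) ?_ (ae_of_all _ fun t => ?_)
  · exact ((boxSpline_measurable d v).comp
      ((measurable_const.sub (measurable_id.smul_const _)))).aestronglyMeasurable
  · rw [Real.norm_eq_abs, abs_of_nonneg (boxSpline_nonneg _ _ _)]
    exact boxSpline_le d v hv _

open scoped ENNReal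

private def cube (n : ℕ) : Set (Fin n → ℝ) := Set.univ.pi fun _ => Set.Icc (0:ℝ) 1

private lemma cube_measurableSet (n : ℕ) : MeasurableSet (cube n) :=
  MeasurableSet.univ_pi fun _ => measurableSet_Icc

private lemma lintegral_add_left_eq_self' {G : Type*} [MeasurableSpace G] [AddGroup G]
    [MeasurableAdd G] (μ : Measure G) [μ.IsAddLeftInvariant] (f : G → ℝ≥0∞) (a : G) :
    ∫⁻ x, f (a + x) ∂μ = ∫⁻ x, f x ∂μ := by
  have h : MeasurableEmbedding fun x : G => a + x :=
    (MeasurableEquiv.addLeft a).measurableEmbedding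
  rw [← h.lintegral_map, map_add_left_eq_self μ a]

theorem boxSpline_pairing (d : ℕ) (n : ℕ) (hn : d ≤ n) :
    ∀ v : List (Fin d → ℝ), v.length = n →
    LinearIndependent ℝ (fun i : Fin d => v.getD i.val 0) →
    ∀ g : (Fin d → ℝ) → ℝ≥0∞, Measurable g →
    ∫⁻ x, g x * ENNReal.ofReal (boxSpline d v x) =
      ∫⁻ t in cube n, g (∑ i : Fin n, t i • v.getD i.val 0) := by
  induction n, hn using Nat.le_induction with
  | base =>
    intro v hv hli g hg
    set M : Matrix (Fin d) (Fin d) ℝ := Matrix.of fun i j : Fin d => v.getD j.val 0 i with hM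
    have hliM : LinearIndependent ℝ (fun i => Matrix.transpose M i) := by
      have : (fun i : Fin d => Matrix.transpose M i) = fun i : Fin d => v.getD i.val 0 := by
        funext i; funext j; rfl
      rw [this]; exact hli
    have hUnit : IsUnit M := Matrix.linearIndependent_cols_iff_isUnit.mp hliM
    have hdet : M.det ≠ 0 := by
      intro h
      have := (Matrix.isUnit_iff_isUnit_det M).mp hUnit
      rw [h] at this
      exact (by simpa using this : False)
    set A : ((Fin d → ℝ) →ₗ[ℝ] (Fin d → ℝ)) := Matrix.toLin' M with hA
    have hAapp : ∀ t : Fin d → ℝ, A t = ∑ j : Fin d, t j • v.getD j.val 0 := by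
      intro t; funext i
      simp [hA, Matrix.toLin'_apply, Matrix.mulVec, dotProduct, Finset.sum_apply, hM,
        mul_comm]
    have hAdet : LinearMap.det A ≠ 0 := by
      rw [hA, LinearMap.det_toLin']; exact hdet
    have hAcont : Continuous A := LinearMap.continuous_on_pi A
    have hAmeas : Measurable A := hAcont.measurable
    have hinj : Function.Injective A := by
      have := Matrix.mulVec_injective_iff_isUnit.mpr hUnit
      intro a b hab
      apply this
      simpa [hA, Matrix.toLin'_apply] using hab
    set S : Set (Fin d → ℝ) := A '' cube d with hS
    have hSm : MeasurableSet S :=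
      (((isCompact_univ_pi fun _ => isCompact_Icc).image hAcont)).measurableSet
    have hmem : ∀ x : Fin d → ℝ,
        (∃ t : Fin d → ℝ, (∀ k, t k ∈ Set.Icc (0:ℝ) 1) ∧ x = ∑ k, t k • v.getD k.val 0)
          ↔ x ∈ S := by
      intro x
      constructor
      · rintro ⟨t, ht, rfl⟩
        exact ⟨t, fun k _ => ht k, hAapp t⟩
      · rintro ⟨t, ht, rfl⟩
        exact ⟨t, fun k => ht k trivial, hAapp t⟩
    have hbox : ∀ x, boxSpline d v x = S.indicator (fun _ => |M.det|⁻¹) x := by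
      intro x
      rw [boxSpline, dif_pos (by omega)]
      by_cases hx : x ∈ S
      · rw [if_pos ((hmem x).mpr hx), Set.indicator_of_mem hx]
      · rw [if_neg (fun hc => hx ((hmem x).mp hc)), Set.indicator_of_notMem hx]
    have hmap : Measure.map A volume = ENNReal.ofReal |(LinearMap.det A)⁻¹| • volume :=
      Real.map_linearMap_volume_pi_eq_smul_volume_pi hAdet
    calc ∫⁻ x, g x * ENNReal.ofReal (boxSpline d v x)
        = ∫⁻ x, S.indicator (fun y => g y * ENNReal.ofReal |M.det|⁻¹) x := by
          congr 1; funext x; rw [hbox]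
          by_cases hx : x ∈ S
          · rw [Set.indicator_of_mem hx, Set.indicator_of_mem hx]
          · rw [Set.indicator_of_notMem hx, Set.indicator_of_notMem hx,
              ENNReal.ofReal_zero, mul_zero]
      _ = ∫⁻ x in S, g x * ENNReal.ofReal |M.det|⁻¹ := lintegral_indicator hSm _
      _ = (∫⁻ x in S, g x) * ENNReal.ofReal |M.det|⁻¹ := lintegral_mul_const _ hg
      _ = ∫⁻ t in cube d, g (∑ i : Fin d, t i • v.getD i.val 0) := by
          rw [show (∫⁻ t in cube d, g (∑ i : Fin d, t i • v.getD i.val 0))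
              = ∫⁻ t in A ⁻¹' S, g (A t) by
            rw [hS, Set.preimage_image_eq _ hinj]
            congr 1; funext t; rw [hAapp]]
          rw [← setLIntegral_map hSm hg hAmeas, hmap]
          rw [Measure.restrict_smul, lintegral_smul_measure]
          rw [mul_comm]
          congr 1
          rw [hA, LinearMap.det_toLin', abs_inv]
  | succ n hn IH =>
    intro v hv hli g hg
    have hlen : ¬ v.length ≤ d := by omega
    set c : Fin d → ℝ := v.getLastD 0 with hc
    set v' : List (Fin d → ℝ) := v.dropLast with hv'
    have hv'len : v'.length = n := by simp [hv', hv]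
    have hgetD : ∀ j : ℕ, j < n → v'.getD j 0 = v.getD j 0 := fun j hj =>
      getD_dropLast' _ _ _ (by omega)
    have hli' : LinearIndependent ℝ (fun i : Fin d => v'.getD i.val 0) := by
      have : (fun i : Fin d => v'.getD i.val 0) = fun i : Fin d => v.getD i.val 0 := by
        funext i; exact hgetD i.val (by omega)
      rw [this]; exact hli
    have hd' : d ≤ v'.length := by omega
    set f := boxSpline d v' with hf
    have hfm : Measurable f := boxSpline_measurable d v'
    -- step 1: express boxSpline v as a lintegral
    have h1 : ∀ x, ENNReal.ofReal (boxSpline d v x)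
        = ∫⁻ a in Set.Ioc (0:ℝ) 1, ENNReal.ofReal (f (x - a • c)) := by
      intro x
      rw [boxSpline, dif_neg hlen, intervalIntegral.integral_of_le zero_le_one]
      exact ofReal_integral_eq_lintegral_ofReal
        (boxSpline_integrableOn_Ioc d v' hd' x c)
        (ae_of_all _ fun a => boxSpline_nonneg _ _ _)
    have hmeas2 : Measurable fun p : (Fin d → ℝ) × ℝ =>
        g p.1 * ENNReal.ofReal (f (p.1 - p.2 • c)) :=
      (hg.comp measurable_fst).mul
        ((ENNReal.measurable_ofReal.comp (hfm.comp
          (measurable_fst.sub (measurable_snd.smul_const _)))))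
    calc ∫⁻ x, g x * ENNReal.ofReal (boxSpline d v x)
        = ∫⁻ x, ∫⁻ a in Set.Ioc (0:ℝ) 1, g x * ENNReal.ofReal (f (x - a • c)) := by
          congr 1; funext x
          rw [h1, lintegral_const_mul _ (by
            exact ENNReal.measurable_ofReal.comp (hfm.comp
              (measurable_const.sub (measurable_id.smul_const _))))]
      _ = ∫⁻ a in Set.Ioc (0:ℝ) 1, ∫⁻ x, g x * ENNReal.ofReal (f (x - a • c)) := by
          apply lintegral_lintegral_swap
          exact hmeas2.aemeasurable
      _ = ∫⁻ a in Set.Ioc (0:ℝ) 1, ∫⁻ s in cube n,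
            g ((∑ j : Fin n, s j • v'.getD j.val 0) + a • c) := by
          apply setLIntegral_congr_fun measurableSet_Ioc
          intro a _
          dsimp only
          have htrans : ∫⁻ x, g x * ENNReal.ofReal (f (x - a • c))
              = ∫⁻ x, g (x + a • c) * ENNReal.ofReal (f x) := by
            rw [← lintegral_add_left_eq_self' volume
              (fun x => g x * ENNReal.ofReal (f (x - a • c))) (a • c)]
            congr 1; funext x
            rw [add_sub_cancel_left, add_comm]
          rw [htrans]
          exact IH v' hv'len hli' (fun x => g (x + a • c)) (hg.comp (measurable_id.add_const _))
      _ = ∫⁻ a in Set.Icc (0:ℝ) 1, ∫⁻ s in cube n,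
            g ((∑ j : Fin n, s j • v'.getD j.val 0) + a • c) := by
          exact setLIntegral_congr Ioc_ae_eq_Icc
      _ = ∫⁻ t in cube (n+1), g (∑ i : Fin (n+1), t i • v.getD i.val 0) := by
          set e := MeasurableEquiv.piFinSuccAbove (fun _ : Fin (n+1) => ℝ) (Fin.last n) with he
          set H : ℝ × (Fin n → ℝ) → ℝ≥0∞ := fun p =>
            g ((∑ j : Fin n, p.2 j • v'.getD j.val 0) + p.1 • c) with hH
          have hpres : MeasurePreserving e volume ((volume : Measure ℝ).prod volume) := by
            rw [volume_pi, (volume_pi : (volume : Measure (Fin n → ℝ)) = _)]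
            exact measurePreserving_piFinSuccAbove (fun _ => (volume : Measure ℝ)) (Fin.last n)
          have hpre : e ⁻¹' (Set.Icc (0:ℝ) 1 ×ˢ cube n) = cube (n+1) := by
            ext w
            simp only [he, Set.mem_preimage, Set.mem_prod, cube, Set.mem_univ_pi, Set.mem_univ,
              MeasurableEquiv.piFinSuccAbove_apply, Fin.insertNthEquiv_symm_apply,
              Fin.removeNth, Fin.succAbove_last]
            constructor
            · rintro ⟨h1', h2'⟩ i
              refine Fin.lastCases ?_ (fun j => ?_) i
              · exact h1'
              · exact h2' j
            · intro h
              exact ⟨h _, fun j => h _⟩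
          have hHe : ∀ w : Fin (n+1) → ℝ, w ∈ cube (n+1) →
              g (∑ i : Fin (n+1), w i • v.getD i.val 0) = H (e w) := by
            intro w _
            have heval : H (e w) =
                g ((∑ j : Fin n, w (Fin.castSucc j) • v'.getD j.val 0) + w (Fin.last n) • c) := by
              simp only [hH, he, MeasurableEquiv.piFinSuccAbove_apply,
                Fin.insertNthEquiv_symm_apply, Fin.removeNth, Fin.succAbove_last]
            rw [heval]
            congr 1
            rw [Fin.sum_univ_castSucc]
            congr 1
            · apply Finset.sum_congr rfl
              intro j _
              have hj : (Fin.castSucc j).val = j.val := rfl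
              rw [hj, ← hgetD j.val (by omega)]
            · have hlast : (Fin.last n).val = n := rfl
              rw [hlast, hc, getLastD_eq_getD _ _ (by
                intro h0
                rw [h0] at hv
                simp at hv), hv]
              simp
          rw [setLIntegral_congr_fun (cube_measurableSet (n+1)) hHe]
          rw [← hpre, hpres.setLIntegral_comp_preimage_emb e.measurableEmbedding]
          rw [← Measure.prod_restrict]
          have hHm : Measurable H := by
            apply hg.comp
            exact (Finset.measurable_sum _ fun j _ =>
              (((measurable_pi_apply j).comp measurable_snd).smul_const _)).add
              (measurable_fst.smul_const _)
          rw [lintegral_prod _ hHm.aemeasurable]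

private lemma lintegral_indicator_one_mul {α : Type*} [MeasurableSpace α] (μ : Measure α)
    {A : Set α} (hA : MeasurableSet A) (f : α → ℝ≥0∞) :
    ∫⁻ y in A, f y ∂μ = ∫⁻ y, A.indicator 1 y * f y ∂μ := by
  classical
  rw [← lintegral_indicator hA]
  congr 1
  funext y
  by_cases hy : y ∈ A <;> simp [hy]

private lemma list_sum_getD (l : List (Fin 1 → ℝ)) : True := trivial

private lemma list_sum_eq_sum_getD {M : Type*} [AddCommMonoid M] (l : List M) :
    l.sum = ∑ i : Fin l.length, l.getD i.val 0 := by
  induction l with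
  | nil => simp
  | cons a l ih =>
    rw [List.sum_cons, ih]
    rw [show (a :: l).length = l.length + 1 from rfl, Fin.sum_univ_succ]
    simp

private lemma cube_volume (n : ℕ) : volume (cube n) = 1 := by
  rw [cube, volume_pi_pi]
  simp [Real.volume_Icc]

private lemma boxSpline_lintegral_one (d : ℕ) (v : List (Fin d → ℝ)) (hv : d ≤ v.length)
    (hli : LinearIndependent ℝ (fun i : Fin d => v.getD i.val 0)) :
    ∫⁻ x, ENNReal.ofReal (boxSpline d v x) = 1 := by
  have h := boxSpline_pairing d v.length hv v rfl hli (fun _ => 1) measurable_const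
  simp only [one_mul] at h
  rw [h, setLIntegral_one, cube_volume]

private lemma boxSpline_integrable (d : ℕ) (v : List (Fin d → ℝ)) (hv : d ≤ v.length)
    (hli : LinearIndependent ℝ (fun i : Fin d => v.getD i.val 0)) :
    Integrable (boxSpline d v) volume := by
  refine ⟨(boxSpline_measurable d v).aestronglyMeasurable, ?_⟩
  rw [hasFiniteIntegral_iff_ofReal (ae_of_all _ (boxSpline_nonneg d v))]
  rw [boxSpline_lintegral_one d v hv hli]
  exact ENNReal.one_lt_top

private lemma lintegral_cube_reflect (n : ℕ) (h : (Fin n → ℝ) → ℝ≥0∞) (hm : Measurable h) :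
    ∫⁻ t in cube n, h t = ∫⁻ t in cube n, h ((1 : Fin n → ℝ) - t) := by
  have hT : Measurable fun t : Fin n → ℝ => (1 : Fin n → ℝ) - t :=
    measurable_const.sub measurable_id
  have hmap : Measure.map (fun t : Fin n → ℝ => (1 : Fin n → ℝ) - t) volume = volume := by
    have hco : (fun t : Fin n → ℝ => (1 : Fin n → ℝ) - t)
        = (fun t : Fin n → ℝ => (1 : Fin n → ℝ) + t) ∘ (fun t : Fin n → ℝ => -t) := by
      funext t; simp [sub_eq_add_neg]
    have h1 : Measurable (fun t : Fin n → ℝ => (1 : Fin n → ℝ) + t) :=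
      measurable_id.const_add _
    have h2 : Measurable (Neg.neg : (Fin n → ℝ) → (Fin n → ℝ)) := measurable_neg
    have hmm : Measure.map ((fun t : Fin n → ℝ => (1 : Fin n → ℝ) + t) ∘ Neg.neg) volume
        = Measure.map (fun t : Fin n → ℝ => (1 : Fin n → ℝ) + t)
            (Measure.map Neg.neg volume) := (Measure.map_map h1 h2).symm
    rw [hco, hmm, Measure.map_neg_eq_self, map_add_left_eq_self]
  have hpre : (fun t : Fin n → ℝ => (1 : Fin n → ℝ) - t) ⁻¹' cube n = cube n := by
    ext t
    simp only [Set.mem_preimage, cube, Set.mem_univ_pi, Set.mem_univ, Pi.sub_apply,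
      Pi.one_apply, Set.mem_Icc]
    constructor <;> intro ht i <;> obtain ⟨h1, h2⟩ := ht i <;> constructor <;> linarith
  conv_lhs => rw [← hmap]
  rw [setLIntegral_map (cube_measurableSet n) hm hT, hpre]

private lemma lintegral_cube_split (n m : ℕ) (H : (Fin n → ℝ) × (Fin m → ℝ) → ℝ≥0∞)
    (hH : Measurable H) :
    ∫⁻ w in cube (n + m), H (fun i => w (Fin.castAdd m i), fun j => w (Fin.natAdd n j)) =
      ∫⁻ s in cube n, ∫⁻ u in cube m, H (s, u) := by
  classical
  set e1 := MeasurableEquiv.piCongrLeft (fun _ : Fin (n+m) => ℝ) finSumFinEquiv with he1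
  have hp1 : MeasurePreserving e1 volume volume := volume_measurePreserving_piCongrLeft _ _
  set e2 := MeasurableEquiv.sumPiEquivProdPi (fun _ : Fin n ⊕ Fin m => ℝ) with he2
  have hp2 : MeasurePreserving e2 volume ((volume : Measure (Fin n → ℝ)).prod volume) :=
    volume_measurePreserving_sumPiEquivProdPi _
  set cubeS : Set (Fin n ⊕ Fin m → ℝ) := Set.univ.pi fun _ => Set.Icc (0:ℝ) 1 with hcubeS
  have hcubeSm : MeasurableSet cubeS := MeasurableSet.univ_pi fun _ => measurableSet_Icc
  have hpre1 : e1 ⁻¹' cube (n + m) = cubeS := by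
    ext p
    simp only [Set.mem_preimage, cube, hcubeS, Set.mem_univ_pi, Set.mem_univ]
    constructor
    · intro hp i
      have := hp (finSumFinEquiv i)
      rwa [he1, MeasurableEquiv.coe_piCongrLeft, Equiv.piCongrLeft_apply_apply] at this
    · intro hp i
      rw [he1, MeasurableEquiv.coe_piCongrLeft,
        show i = finSumFinEquiv (finSumFinEquiv.symm i) by simp,
        Equiv.piCongrLeft_apply_apply]
      exact hp _
  have key1 := hp1.setLIntegral_comp_preimage_emb e1.measurableEmbedding
    (fun w => H (fun i => w (Fin.castAdd m i), fun j => w (Fin.natAdd n j))) (cube (n + m))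
  rw [← key1, hpre1]
  have hint1 : ∀ p : Fin n ⊕ Fin m → ℝ,
      H (fun i => e1 p (Fin.castAdd m i), fun j => e1 p (Fin.natAdd n j))
        = H (e2 p) := by
    intro p
    have l1 : ∀ i : Fin n, e1 p (Fin.castAdd m i) = p (Sum.inl i) := by
      intro i
      rw [he1, MeasurableEquiv.coe_piCongrLeft,
        show Fin.castAdd m i = finSumFinEquiv (Sum.inl i) from (finSumFinEquiv_apply_left i).symm,
        Equiv.piCongrLeft_apply_apply]
    have l2 : ∀ j : Fin m, e1 p (Fin.natAdd n j) = p (Sum.inr j) := by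
      intro j
      rw [he1, MeasurableEquiv.coe_piCongrLeft,
        show Fin.natAdd n j = finSumFinEquiv (Sum.inr j) from (finSumFinEquiv_apply_right j).symm,
        Equiv.piCongrLeft_apply_apply]
    simp only [l1, l2, he2, MeasurableEquiv.coe_sumPiEquivProdPi, Equiv.sumPiEquivProdPi,
      Equiv.coe_fn_mk]
  have hstep : (∫⁻ p in cubeS, H (fun i => e1 p (Fin.castAdd m i), fun j => e1 p (Fin.natAdd n j)))
      = ∫⁻ p in cubeS, H (e2 p) :=
    setLIntegral_congr_fun hcubeSm (fun p _ => hint1 p)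
  rw [hstep]
  have hpre2 : e2 ⁻¹' (cube n ×ˢ cube m) = cubeS := by
    ext p
    simp only [Set.mem_preimage, cube, hcubeS, Set.mem_univ_pi, Set.mem_univ, Set.mem_prod,
      he2, MeasurableEquiv.coe_sumPiEquivProdPi, Equiv.sumPiEquivProdPi]
    constructor
    · rintro ⟨h1, h2⟩ i
      cases i with
      | inl i => exact h1 i
      | inr j => exact h2 j
    · intro hp
      exact ⟨fun i => hp _, fun j => hp _⟩
  rw [← hpre2, hp2.setLIntegral_comp_preimage_emb e2.measurableEmbedding]
  rw [← Measure.prod_restrict]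
  rw [lintegral_prod _ hH.aemeasurable]

/-- Dahmen–Micchelli: inner products of box splines. With
`m_E = (v₁ + ⋯ + vₙ)/2`, for Lebesgue-a.e. `y`,
`∫ M_E(x) M_F(x + y) dx = M_{E++F}(2 m_E + y)`. -/
theorem boxSpline_inner_product
    (d : ℕ) (hd : 1 ≤ d)
    (E F : List (Fin d → ℝ)) (hE : d ≤ E.length) (hF : d ≤ F.length)
    (hliE : LinearIndependent ℝ (fun i : Fin d => E.getD i.val 0))
    (hliF : LinearIndependent ℝ (fun i : Fin d => F.getD i.val 0))
    (mE : Fin d → ℝ) (hmE : mE = (2 : ℝ)⁻¹ • E.sum) :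
    ∀ᵐ y : Fin d → ℝ ∂volume,
      ∫ x, boxSpline d E x * boxSpline d F (x + y) =
        boxSpline d (E ++ F) ((2 : ℝ) • mE + y) := by

  classical
  have h2mE : (2 : ℝ) • mE = E.sum := by
    rw [hmE, smul_smul]
    norm_num
  set eE : (Fin d → ℝ) → ℝ≥0∞ := fun x => ENNReal.ofReal (boxSpline d E x) with heE
  set eF : (Fin d → ℝ) → ℝ≥0∞ := fun x => ENNReal.ofReal (boxSpline d F x) with heF
  have hMe : Measurable (boxSpline d E) := boxSpline_measurable d E
  have hMf : Measurable (boxSpline d F) := boxSpline_measurable d F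
  have hMef : Measurable (boxSpline d (E ++ F)) := boxSpline_measurable d (E ++ F)
  have heEm : Measurable eE := ENNReal.measurable_ofReal.comp hMe
  have heFm : Measurable eF := ENNReal.measurable_ofReal.comp hMf
  set BF : ℝ := |Matrix.det (Matrix.of fun i j : Fin d => F.getD j.val 0 i)|⁻¹ with hBF
  have hFle : ∀ x, boxSpline d F x ≤ BF := boxSpline_le d F hF
  have hMeInt : Integrable (boxSpline d E) volume := boxSpline_integrable d E hE hliE
  have hint : ∀ y : Fin d → ℝ,
      Integrable (fun x => boxSpline d E x * boxSpline d F (x + y)) volume := by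
    intro y
    refine Integrable.mono' (hMeInt.mul_const BF) ?_ (ae_of_all _ fun x => ?_)
    · exact (hMe.mul (hMf.comp (measurable_id.add_const y))).aestronglyMeasurable
    · rw [Real.norm_eq_abs,
        abs_of_nonneg (mul_nonneg (boxSpline_nonneg _ _ _) (boxSpline_nonneg _ _ _))]
      exact mul_le_mul_of_nonneg_left (hFle _) (boxSpline_nonneg _ _ _)
  have hofReal : ∀ y : Fin d → ℝ,
      ENNReal.ofReal (∫ x, boxSpline d E x * boxSpline d F (x + y))
        = ∫⁻ x, eE x * eF (x + y) := by
    intro y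
    rw [ofReal_integral_eq_lintegral_ofReal (hint y)
      (ae_of_all _ fun x => mul_nonneg (boxSpline_nonneg _ _ _) (boxSpline_nonneg _ _ _))]
    congr 1
    funext x
    rw [ENNReal.ofReal_mul (boxSpline_nonneg _ _ _)]
  -- getD facts for the concatenation
  have hgetDE : ∀ i : ℕ, i < E.length → (E ++ F).getD i 0 = E.getD i 0 := by
    intro i hi
    rw [List.getD_eq_getElem _ _ (by simp only [List.length_append]; omega),
       List.getD_eq_getElem _ _ (by omega), List.getElem_append_left]
  have hgetDF : ∀ j : ℕ, j < F.length → (E ++ F).getD (E.length + j) 0 = F.getD j 0 := by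
    intro j hj
    rw [List.getD_eq_getElem _ _ (by simp only [List.length_append]; omega),
       List.getD_eq_getElem _ _ (by omega), List.getElem_append_right (by omega)]
    congr 1
    omega
  have hliEF : LinearIndependent ℝ (fun i : Fin d => (E ++ F).getD i.val 0) := by
    have heq : (fun i : Fin d => (E ++ F).getD i.val 0) = fun i : Fin d => E.getD i.val 0 := by
      funext i; exact hgetDE i.val (by omega)
    rw [heq]; exact hliE
  have hEFlen : (E ++ F).length = E.length + F.length := by simp
  have hESn : E.sum = ∑ i : Fin E.length, E.getD i.val 0 := list_sum_eq_sum_getD E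
  set L : (Fin d → ℝ) → ℝ := fun y => ∫ x, boxSpline d E x * boxSpline d F (x + y) with hL
  have hLm : Measurable L := by
    have hsm : StronglyMeasurable fun p : (Fin d → ℝ) × (Fin d → ℝ) =>
        boxSpline d E p.2 * boxSpline d F (p.2 + p.1) :=
      ((hMe.comp measurable_snd).mul
        (hMf.comp (measurable_snd.add measurable_fst))).stronglyMeasurable
    exact hsm.integral_prod_right'.measurable
  have hkey : ∀ A : Set (Fin d → ℝ), MeasurableSet A →
      ∫⁻ y in A, ENNReal.ofReal (L y)
        = ∫⁻ y in A, ENNReal.ofReal (boxSpline d (E ++ F) (E.sum + y)) := by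
    intro A hA
    set χ : (Fin d → ℝ) → ℝ≥0∞ := A.indicator 1 with hχ
    have hχm : Measurable χ := measurable_one.indicator hA
    -- Φ chain
    have hΦ : ∫⁻ y in A, ENNReal.ofReal (L y)
        = ∫⁻ s in cube E.length, ∫⁻ u in cube F.length,
            χ ((∑ j : Fin F.length, u j • F.getD j.val 0)
              - (∑ i : Fin E.length, s i • E.getD i.val 0)) := by
      calc ∫⁻ y in A, ENNReal.ofReal (L y)
          = ∫⁻ y in A, ∫⁻ x, eE x * eF (x + y) :=
            setLIntegral_congr_fun hA (fun y _ => hofReal y)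
        _ = ∫⁻ x, ∫⁻ y in A, eE x * eF (x + y) := by
            apply lintegral_lintegral_swap
            exact ((heEm.comp measurable_snd).mul
              (heFm.comp (measurable_snd.add measurable_fst))).aemeasurable
        _ = ∫⁻ x, eE x * ∫⁻ y in A, eF (x + y) := by
            congr 1; funext x
            have hm0 : Measurable fun y : Fin d → ℝ => eF (x + y) :=
              heFm.comp (measurable_id.const_add x)
            exact lintegral_const_mul _ hm0
        _ = ∫⁻ x, eE x * ∫⁻ y, χ (y - x) * eF y := by
            congr 1; funext x
            congr 1
            rw [lintegral_indicator_one_mul volume hA,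
              ← lintegral_add_left_eq_self' volume (fun y => χ (y - x) * eF y) x]
            congr 1; funext y
            rw [add_sub_cancel_left]
        _ = ∫⁻ x, ∫⁻ y, (χ (y - x) * eE x) * eF y := by
            congr 1; funext x
            have hm1 : Measurable fun y : Fin d → ℝ => χ (y - x) * eF y :=
              (hχm.comp (measurable_id.sub_const x)).mul heFm
            rw [← lintegral_const_mul _ hm1]
            congr 1; funext y
            ring
        _ = ∫⁻ y, ∫⁻ x, (χ (y - x) * eE x) * eF y := by
            apply lintegral_lintegral_swap
            apply Measurable.aemeasurable
            exact ((hχm.comp (measurable_snd.sub measurable_fst)).mul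
              (heEm.comp measurable_fst)).mul (heFm.comp measurable_snd)
        _ = ∫⁻ y, (∫⁻ x, χ (y - x) * eE x) * eF y := by
            congr 1; funext y
            have hm2 : Measurable fun x : Fin d → ℝ => χ (y - x) * eE x :=
              (hχm.comp (measurable_const.sub measurable_id)).mul heEm
            rw [lintegral_mul_const _ hm2]
        _ = ∫⁻ y, (∫⁻ s in cube E.length,
              χ (y - ∑ i : Fin E.length, s i • E.getD i.val 0)) * eF y := by
            congr 1; funext y
            congr 1
            exact boxSpline_pairing d E.length hE E rfl hliE (fun x => χ (y - x))
              (hχm.comp (measurable_const.sub measurable_id))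
        _ = ∫⁻ y, ∫⁻ s in cube E.length,
              χ (y - ∑ i : Fin E.length, s i • E.getD i.val 0) * eF y := by
            congr 1; funext y
            have hm3 : Measurable fun s : Fin E.length → ℝ =>
                χ (y - ∑ i : Fin E.length, s i • E.getD i.val 0) :=
              hχm.comp (measurable_const.sub
                (Finset.measurable_sum _ fun i _ => (measurable_pi_apply i).smul_const _))
            rw [lintegral_mul_const _ hm3]
        _ = ∫⁻ s in cube E.length, ∫⁻ y,
              χ (y - ∑ i : Fin E.length, s i • E.getD i.val 0) * eF y := by
            apply lintegral_lintegral_swap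
            apply Measurable.aemeasurable
            exact (hχm.comp (measurable_fst.sub (Finset.measurable_sum _ fun i _ =>
              ((measurable_pi_apply i).comp measurable_snd).smul_const _))).mul
              (heFm.comp measurable_fst)
        _ = ∫⁻ s in cube E.length, ∫⁻ u in cube F.length,
              χ ((∑ j : Fin F.length, u j • F.getD j.val 0)
                - (∑ i : Fin E.length, s i • E.getD i.val 0)) := by
            apply setLIntegral_congr_fun (cube_measurableSet E.length)
            intro s _
            exact boxSpline_pairing d F.length hF F rfl hliF
              (fun y => χ (y - ∑ i : Fin E.length, s i • E.getD i.val 0))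
              (hχm.comp (measurable_id.sub_const _))
    -- reflection
    have hrefl : ∫⁻ s in cube E.length, ∫⁻ u in cube F.length,
            χ ((∑ j : Fin F.length, u j • F.getD j.val 0)
              - (∑ i : Fin E.length, s i • E.getD i.val 0))
        = ∫⁻ s in cube E.length, ∫⁻ u in cube F.length,
            χ ((∑ i : Fin E.length, s i • E.getD i.val 0)
              + (∑ j : Fin F.length, u j • F.getD j.val 0) - E.sum) := by
      have hinner : Measurable fun p : (Fin E.length → ℝ) × (Fin F.length → ℝ) =>
          χ ((∑ j : Fin F.length, p.2 j • F.getD j.val 0)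
            - (∑ i : Fin E.length, p.1 i • E.getD i.val 0)) := by
        apply hχm.comp
        exact (Finset.measurable_sum _ fun j _ =>
          ((measurable_pi_apply j).comp measurable_snd).smul_const _).sub
          (Finset.measurable_sum _ fun i _ =>
          ((measurable_pi_apply i).comp measurable_fst).smul_const _)
      rw [lintegral_cube_reflect E.length _ hinner.lintegral_prod_right']
      apply setLIntegral_congr_fun (cube_measurableSet E.length)
      intro s _
      apply setLIntegral_congr_fun (cube_measurableSet F.length)
      intro u _
      dsimp only
      congr 1
      have hTE1 : (∑ i : Fin E.length, ((1 : Fin E.length → ℝ) - s) i • E.getD i.val 0)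
          = (∑ i : Fin E.length, E.getD i.val 0)
            - ∑ i : Fin E.length, s i • E.getD i.val 0 := by
        rw [← Finset.sum_sub_distrib]
        exact Finset.sum_congr rfl fun i _ => by
          simp [Pi.sub_apply, sub_smul]
      rw [hTE1, hESn]
      abel
    -- split
    have hsplit : ∫⁻ s in cube E.length, ∫⁻ u in cube F.length,
            χ ((∑ i : Fin E.length, s i • E.getD i.val 0)
              + (∑ j : Fin F.length, u j • F.getD j.val 0) - E.sum)
        = ∫⁻ w in cube (E.length + F.length),
            χ ((∑ i : Fin (E.length + F.length), w i • (E ++ F).getD i.val 0) - E.sum) := by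
      have hHm : Measurable fun p : (Fin E.length → ℝ) × (Fin F.length → ℝ) =>
          χ ((∑ i : Fin E.length, p.1 i • E.getD i.val 0)
            + (∑ j : Fin F.length, p.2 j • F.getD j.val 0) - E.sum) := by
        apply hχm.comp
        exact ((Finset.measurable_sum _ fun i _ =>
          ((measurable_pi_apply i).comp measurable_fst).smul_const _).add
          (Finset.measurable_sum _ fun j _ =>
          ((measurable_pi_apply j).comp measurable_snd).smul_const _)).sub_const _
      rw [← lintegral_cube_split E.length F.length _ hHm]
      apply setLIntegral_congr_fun (cube_measurableSet _)
      intro w _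
      dsimp only
      congr 2
      rw [Fin.sum_univ_add]
      congr 1
      · refine Finset.sum_congr rfl fun i _ => ?_
        congr 1
        exact (hgetDE i.val i.isLt).symm
      · refine Finset.sum_congr rfl fun j _ => ?_
        congr 1
        exact (hgetDF j.val j.isLt).symm
    -- Ψ chain
    have hΨ : ∫⁻ y in A, ENNReal.ofReal (boxSpline d (E ++ F) (E.sum + y))
        = ∫⁻ w in cube (E.length + F.length),
            χ ((∑ i : Fin (E.length + F.length), w i • (E ++ F).getD i.val 0) - E.sum) := by
      calc ∫⁻ y in A, ENNReal.ofReal (boxSpline d (E ++ F) (E.sum + y))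
          = ∫⁻ y, χ y * ENNReal.ofReal (boxSpline d (E ++ F) (E.sum + y)) :=
            lintegral_indicator_one_mul volume hA _
        _ = ∫⁻ y, χ (y - E.sum) * ENNReal.ofReal (boxSpline d (E ++ F) y) := by
            rw [← lintegral_add_left_eq_self' volume
              (fun y => χ (y - E.sum) * ENNReal.ofReal (boxSpline d (E ++ F) y)) E.sum]
            congr 1; funext y
            simp only [add_sub_cancel_left]
        _ = ∫⁻ w in cube (E.length + F.length),
              χ ((∑ i : Fin (E.length + F.length), w i • (E ++ F).getD i.val 0) - E.sum) :=
            boxSpline_pairing d (E.length + F.length) (by omega) (E ++ F) hEFlen hliEF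
              (fun y => χ (y - E.sum)) (hχm.comp (measurable_id.sub_const _))
    rw [hΦ, hrefl, hsplit, hΨ]
  have hae : (fun y => ENNReal.ofReal (L y)) =ᵐ[volume]
      fun y => ENNReal.ofReal (boxSpline d (E ++ F) (E.sum + y)) := by
    apply ae_eq_of_forall_setLIntegral_eq_of_sigmaFinite
    · exact ENNReal.measurable_ofReal.comp hLm
    · exact ENNReal.measurable_ofReal.comp (hMef.comp (measurable_id.const_add E.sum))
    · intro s hs _
      exact hkey s hs
  simp only [h2mE]
  filter_upwards [hae] with y hy
  have h1 : 0 ≤ L y :=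
    integral_nonneg fun x => mul_nonneg (boxSpline_nonneg _ _ _) (boxSpline_nonneg _ _ _)
  have h2 : 0 ≤ boxSpline d (E ++ F) (E.sum + y) := boxSpline_nonneg _ _ _
  exact (ENNReal.ofReal_eq_ofReal_iff h1 h2).mp hy
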